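/- Let R ⊆ Σ* and $ ∉ Σ. For every transition-based nondeterministic co-Büchi automaton A with L(A) = ⋈_$(R), there exists a nondeterministic finite automaton N with L(N) = R and |N| ≤ |A| + 1. Moreover, if R has a bad infix (a word x such that every word containing x as an infix is not in R), then |N| ≤ |A|. -/

import Mathlib

open Filter

variable {A Q : Type}

/-- Extension of a transition function to sets of states and finite words. -/
def extSet (δ : Q → A → Set Q) : Set Q → List A → Set Q
  | S, [] => S
  | S, a :: u => extSet δ (⋃ q ∈ S, δ q a) u

/-- A nondeterministic automaton on finite words (NFW), with a total
transition function. -/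
structure NFW (A Q : Type) where
  init : Set Q
  δ : Q → A → Set Q
  F : Set Q
  init_nonempty : init.Nonempty
  δ_nonempty : ∀ q a, (δ q a).Nonempty

/-- The language of finite words recognized by an NFW. -/
def NFW.Lang (N : NFW A Q) : Set (List A) :=
  {u | ∃ q ∈ extSet N.δ N.init u, q ∈ N.F}

/-- A transition-based nondeterministic co-Büchi automaton (tNCW). -/
structure tNCW (A Q : Type) where
  init : Set Q
  δ : Q → A → Set Q
  α : Set (Q × A × Q)
  init_nonempty : init.Nonempty
  δ_nonempty : ∀ q a, (δ q a).Nonempty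

namespace tNCW

/-- `L(A^q)`: words having a run from `q` traversing `α`-transitions only
finitely often. -/
def LangFrom (M : tNCW A Q) (q : Q) : Set (ℕ → A) :=
  {w | ∃ r : ℕ → Q, r 0 = q ∧ (∀ i, r (i + 1) ∈ M.δ (r i) (w i)) ∧
    ∀ᶠ i in atTop, (r i, w i, r (i + 1)) ∉ M.α}

def Lang (M : tNCW A Q) : Set (ℕ → A) :=
  {w | ∃ q ∈ M.init, w ∈ M.LangFrom q}

/-- Semantic determinism. -/
def SD (M : tNCW A Q) : Prop :=
  (∀ q₁ ∈ M.init, ∀ q₂ ∈ M.init, M.LangFrom q₁ = M.LangFrom q₂) ∧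
  ∀ q a, ∀ q₁ ∈ M.δ q a, ∀ q₂ ∈ M.δ q a, M.LangFrom q₁ = M.LangFrom q₂

end tNCW

/-- `w` has a suffix in `($·R)^ω`: there is an infinite increasing sequence
`f` of `$`-positions (`$` is `none`) such that, between any two consecutive
ones, the letters spell a word of `R`. -/
def HasDollarRSuffix (R : Set (List A)) (w : ℕ → Option A) : Prop :=
  ∃ f : ℕ → ℕ, StrictMono f ∧ ∀ k, w (f k) = none ∧
    ∃ x ∈ R, (List.ofFn fun t : Fin (f (k + 1) - (f k + 1)) => w (f k + 1 + t)) = x.map some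

/-- `⋈_$(R)`: the words over `Σ ∪ {$}` that either contain finitely many
`$`'s or have a suffix in `($·R)^ω`. -/
def Bowtie (R : Set (List A)) : Set (ℕ → Option A) :=
  {w | (∀ N, ∃ i, N ≤ i ∧ w i = none) → HasDollarRSuffix R w}

/-- `x` is a bad infix for `R`: every word containing `x` as an infix is not
in `R`. -/
def BadInfix (R : Set (List A)) (x : List A) : Prop := ∀ u, x <:+: u → u ∉ R

/- ===================== auxiliary development ===================== -/

section Aux

variable {B : Type}

/-- A finite run of a nondeterministic transition function along a word. -/
def finRun (δ : Q → B → Set Q) : Q → List B → Q → Prop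
  | p, [], q => p = q
  | p, b :: u, q => ∃ p', p' ∈ δ p b ∧ finRun δ p' u q

lemma finRun_nil (δ : Q → B → Set Q) (p : Q) : finRun δ p [] p := rfl

lemma finRun_single {δ : Q → B → Set Q} {p q : Q} {b : B} (h : q ∈ δ p b) :
    finRun δ p [b] q := ⟨q, h, rfl⟩

lemma finRun_append {δ : Q → B → Set Q} {p q s : Q} {u v : List B}
    (h1 : finRun δ p u q) (h2 : finRun δ q v s) : finRun δ p (u ++ v) s := by
  induction u generalizing p with
  | nil => cases h1; simpa using h2
  | cons b u ih =>
    obtain ⟨p', hp', h1'⟩ := h1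
    exact ⟨p', hp', ih h1'⟩

lemma finRun_mono {δ₁ δ₂ : Q → B → Set Q} (hδ : ∀ q b, δ₁ q b ⊆ δ₂ q b)
    {p q : Q} {u : List B} (h : finRun δ₁ p u q) : finRun δ₂ p u q := by
  induction u generalizing p with
  | nil => exact h
  | cons b u ih =>
    obtain ⟨p', hp', h'⟩ := h
    exact ⟨p', hδ _ _ hp', ih h'⟩

lemma mem_extSet_iff {δ : Q → B → Set Q} {S : Set Q} {u : List B} {q : Q} :
    q ∈ extSet δ S u ↔ ∃ p ∈ S, finRun δ p u q := by
  induction u generalizing S with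
  | nil =>
    simp only [extSet]
    constructor
    · intro hq; exact ⟨q, hq, rfl⟩
    · rintro ⟨p, hp, hrun⟩; cases hrun; exact hp
  | cons b u ih =>
    simp only [extSet, ih]
    constructor
    · rintro ⟨p', hp', hrun⟩
      simp only [Set.mem_iUnion] at hp'
      obtain ⟨p, hp, hp'⟩ := hp'
      exact ⟨p, hp, p', hp', hrun⟩
    · rintro ⟨p, hp, p', hp', hrun⟩
      refine ⟨p', ?_, hrun⟩
      simp only [Set.mem_iUnion]
      exact ⟨p, hp, hp'⟩

lemma finRun_toFun {δ : Q → B → Set Q} {p q : Q} {u : List B} (h : finRun δ p u q) :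
    ∃ r : ℕ → Q, r 0 = p ∧ r u.length = q ∧
      ∀ t : Fin u.length, r (t + 1) ∈ δ (r t) (u.get t) := by
  induction u generalizing p with
  | nil =>
    exact ⟨fun _ => p, rfl, h, fun t => absurd t.2 (by simp)⟩
  | cons b u ih =>
    obtain ⟨p', hp', h'⟩ := h
    obtain ⟨r, hr0, hrl, hrt⟩ := ih h'
    refine ⟨fun i => Nat.casesOn i p (fun j => r j), rfl, hrl, ?_⟩
    rintro ⟨t, ht⟩
    cases t with
    | zero => simpa [hr0] using hp'
    | succ t => exact hrt ⟨t, by simpa using ht⟩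

lemma fun_toFinRun {δ : Q → B → Set Q} (r : ℕ → Q) (w : ℕ → B) (s len : ℕ)
    (h : ∀ i, s ≤ i → i < s + len → r (i + 1) ∈ δ (r i) (w i)) :
    finRun δ (r s) (List.ofFn fun t : Fin len => w (s + t)) (r (s + len)) := by
  induction len with
  | zero => simpa using finRun_nil δ (r s)
  | succ n ih =>
    have h1 : finRun δ (r s) (List.ofFn fun t : Fin n => w (s + t)) (r (s + n)) :=
      ih fun i hi hi' => h i hi (by omega)
    have h2 : finRun δ (r (s + n)) [w (s + n)] (r (s + n + 1)) :=
      finRun_single (h (s + n) (by omega) (by omega))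
    have e : (List.ofFn fun t : Fin (n + 1) => w (s + t)) =
        (List.ofFn fun t : Fin n => w (s + t)) ++ [w (s + n)] := by
      rw [List.ofFn_succ', List.concat_eq_append]
      simp
    rw [e]
    exact finRun_append h1 h2

end Aux

section MDef

variable (M : tNCW (Option A) Q)

/-- safe transitions -/
def sdel : Q → Option A → Set Q := fun q a => {q' | q' ∈ M.δ q a ∧ (q, a, q') ∉ M.α}

/-- safe path (reflexive-transitive, over arbitrary letters) -/
def SP (p q : Q) : Prop := ∃ y, finRun (sdel M) p y q

/-- transitions of the constructed NFW: safe transitions staying in the same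
safe strongly-connected component -/
def Ttr : Q → A → Set Q := fun q a => {q' | q' ∈ sdel M q (some a) ∧ SP M q' q}

def Reach (p : Q) : Prop := ∃ v, p ∈ extSet M.δ M.init v

def Gs : Set Q := {p | Reach M p ∧ ∃ q', p ∈ sdel M q' none ∧ SP M p q'}

def Fs : Set Q := {q | ∃ p, p ∈ sdel M q none ∧ SP M p q}

end MDef

section MLemmas

variable {M : tNCW (Option A) Q}

lemma SP_refl (p : Q) : SP M p p := ⟨[], rfl⟩

lemma SP_trans {p q s : Q} (h1 : SP M p q) (h2 : SP M q s) : SP M p s := by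
  obtain ⟨y1, h1⟩ := h1; obtain ⟨y2, h2⟩ := h2
  exact ⟨y1 ++ y2, finRun_append h1 h2⟩

lemma SP_step {p q : Q} {b : Option A} (h : q ∈ sdel M p b) : SP M p q :=
  ⟨[b], finRun_single h⟩

lemma sdel_sub (q : Q) (b : Option A) : sdel M q b ⊆ M.δ q b := fun _ h => h.1

lemma Ttr_run_safe {p q : Q} {u : List A} (h : finRun (Ttr M) p u q) :
    finRun (sdel M) p (u.map some) q := by
  induction u generalizing p with
  | nil => exact h
  | cons b u ih =>
    obtain ⟨p', hp', h'⟩ := h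
    exact ⟨p', hp'.1, ih h'⟩

lemma Ttr_run_back {p q : Q} {u : List A} (h : finRun (Ttr M) p u q) : SP M q p := by
  induction u generalizing p with
  | nil => exact ⟨[], (show p = q from h).symm⟩
  | cons b u ih =>
    obtain ⟨p', hp', h'⟩ := h
    exact SP_trans (ih h') hp'.2

lemma Reach_extend {p q : Q} {y : List (Option A)} (hp : Reach M p)
    (h : finRun M.δ p y q) : Reach M q := by
  obtain ⟨v, hv⟩ := hp
  obtain ⟨p0, hp0, hrun⟩ := mem_extSet_iff.mp hv
  exact ⟨v ++ y, mem_extSet_iff.mpr ⟨p0, hp0, finRun_append hrun h⟩⟩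

/-- helper : successor index modulo cycle length -/
private lemma cyc_mod_succ {m : ℕ} (hm : 0 < m) (j : ℕ) (c : ℕ → Q) (hc : c m = c 0) :
    c ((j + 1) % m) = c (j % m + 1) := by
  have h1 : (j % m + 1) % m = (j + 1) % m := by
    conv_rhs => rw [← Nat.mod_add_mod]
  by_cases h : j % m + 1 < m
  · rw [← h1, Nat.mod_eq_of_lt h]
  · have h2 : j % m + 1 = m := by have := Nat.mod_lt j hm; omega
    rw [← h1, h2, Nat.mod_self]
    exact hc.symm

/-- Main construction: a reachable safe cycle yields a word of `M.Lang` that is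
eventually periodic with period the cycle labels. -/
lemma cyc_lang {p : Q} {z : List (Option A)} (hz : finRun (sdel M) p z p)
    (hm : 0 < z.length) (hre : Reach M p) :
    ∃ w : ℕ → Option A, ∃ n : ℕ, w ∈ M.Lang ∧
      ∀ k (t : Fin z.length), w (n + k * z.length + t) = z.get t := by
  classical
  obtain ⟨v, hv⟩ := hre
  obtain ⟨p0, hp0, hvrun⟩ := mem_extSet_iff.mp hv
  obtain ⟨r0, hr00, hr0l, hr0t⟩ := finRun_toFun hvrun
  obtain ⟨c, hc0, hcl, hct⟩ := finRun_toFun hz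
  set n := v.length with hn
  set m := z.length with hmm
  have hcm : c m = c 0 := by rw [hc0, hcl]
  refine ⟨fun i => if h : i < n then v.get ⟨i, h⟩ else z.get ⟨(i - n) % m, Nat.mod_lt _ hm⟩,
      n, ?_, ?_⟩
  · refine ⟨p0, hp0, fun i => if i < n then r0 i else c ((i - n) % m), ?_, ?_, ?_⟩
    · by_cases h0 : 0 < n
      · simp only [if_pos h0]; exact hr00
      · have hn0 : n = 0 := by omega
        simp only [if_neg (show ¬ (0:ℕ) < n by omega)]
        rw [show (0 - n) % m = 0 by simp, hc0, ← hr0l, hn0]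
        exact hr00.symm ▸ rfl
    · intro i
      by_cases h1 : i + 1 < n
      · have h2 : i < n := by omega
        simp only [dif_pos h2, if_pos h1, if_pos h2]
        exact hr0t ⟨i, h2⟩
      · by_cases h2 : i < n
        · -- i + 1 = n : last step of the prefix
          have h3 : i + 1 = n := by omega
          simp only [dif_pos h2, if_neg (by omega : ¬ i + 1 < n), if_pos h2]
          have he : c ((i + 1 - n) % m) = r0 (i + 1) := by
            rw [h3, Nat.sub_self, Nat.zero_mod, hc0, ← hr0l]
          rw [he]
          exact hr0t ⟨i, h2⟩
        · -- periodic part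
          have h3 : ¬ i + 1 < n := by omega
          simp only [dif_neg h2, if_neg h3, if_neg h2]
          set j := i - n with hj
          have hij : i + 1 - n = j + 1 := by omega
          rw [hij, cyc_mod_succ hm j c hcm]
          exact And.left (hct ⟨j % m, Nat.mod_lt _ hm⟩)
    · rw [eventually_atTop]
      refine ⟨n, fun i hi => ?_⟩
      have h2 : ¬ i < n := by omega
      by_cases h1 : i + 1 < n
      · omega
      · simp only [dif_neg h2, if_neg h1, if_neg h2]
        set j := i - n with hj
        have hij : i + 1 - n = j + 1 := by omega
        rw [hij, cyc_mod_succ hm j c hcm]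
        exact And.right (hct ⟨j % m, Nat.mod_lt _ hm⟩)
  · intro k t
    have h2 : ¬ n + k * m + ↑t < n := by omega
    simp only [dif_neg (show ¬ n + k * z.length + ↑t < n by omega)]
    refine congrArg z.get (Fin.ext ?_)
    show (n + k * m + ↑t - n) % m = ↑t
    rw [show n + k * m + ↑t - n = ↑t + k * m from by omega, Nat.add_mul_mod_self_right,
      Nat.mod_eq_of_lt t.2]

end MLemmas

section Core

variable {R : Set (List A)} {w : ℕ → Option A}

lemma ofFn_map_some {s L : ℕ} {x : List A}
    (heq : (List.ofFn fun t : Fin L => w (s + ↑t)) = x.map some) :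
    x.length = L ∧ ∀ j (hj : j < L), w (s + j) = some (x[j]'(by
      have := congrArg List.length heq; simp at this; omega)) := by
  have hlen : x.length = L := by
    have := congrArg List.length heq; simpa using this.symm
  refine ⟨hlen, fun j hj => ?_⟩
  have h1 : (List.ofFn fun t : Fin L => w (s + ↑t))[j]'(by simpa using hj) = w (s + j) := by
    simp
  have h2 := List.getElem_of_eq heq (show j < (List.ofFn fun t : Fin L => w (s + ↑t)).length by
    simpa using hj)
  rw [← h1, h2]
  simp

lemma hds_some {f : ℕ → ℕ}
    (hblk : ∀ k, w (f k) = none ∧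
      ∃ x ∈ R, (List.ofFn fun t : Fin (f (k + 1) - (f k + 1)) => w (f k + 1 + t)) = x.map some)
    (k j : ℕ) (h1 : f k < j) (h2 : j < f (k + 1)) : ∃ a, w j = some a := by
  obtain ⟨x, hxR, heq⟩ := (hblk k).2
  obtain ⟨hlen, hval⟩ := ofFn_map_some heq
  have hj : j - (f k + 1) < f (k + 1) - (f k + 1) := by omega
  have := hval _ hj
  rw [show f k + 1 + (j - (f k + 1)) = j from by omega] at this
  exact ⟨_, this⟩

lemma hds_none_eq {f : ℕ → ℕ} (hmono : StrictMono f)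
    (hblk : ∀ k, w (f k) = none ∧
      ∃ x ∈ R, (List.ofFn fun t : Fin (f (k + 1) - (f k + 1)) => w (f k + 1 + t)) = x.map some)
    (m : ℕ) (hm : f 0 ≤ m) (hn : w m = none) : ∃ k, f k = m := by
  classical
  set P : ℕ → Prop := fun k => f k ≤ m with hP
  have hP0 : P 0 := hm
  set k := Nat.findGreatest P m with hk
  have hPk : P k := Nat.findGreatest_spec (Nat.zero_le m) hP0
  have hfk1 : m < f (k + 1) := by
    by_cases hc : k + 1 ≤ m
    · have := Nat.findGreatest_is_greatest (lt_add_one k) hc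
      simp only [hP, not_le] at this
      exact this
    · have h1 : m < k + 1 := by omega
      have h2 : k + 1 ≤ f (k + 1) := hmono.le_apply
      omega
  rcases eq_or_lt_of_le (hPk : f k ≤ m) with h | h
  · exact ⟨k, h⟩
  · obtain ⟨a, ha⟩ := hds_some hblk k m h hfk1
    rw [hn] at ha; cases ha

/-- If `w ∈ Bowtie R` has infinitely many `$`s and contains, at unboundedly
late positions, a `$`-delimited occurrence of the finite word `b`, then `b ∈ R`. -/
lemma block_mem (hw : w ∈ Bowtie R)
    (hinf : ∀ N, ∃ i, N ≤ i ∧ w i = none) (b : List A)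
    (hocc : ∀ N, ∃ i, N ≤ i ∧ w i = none ∧
      (∀ t : Fin b.length, w (i + 1 + ↑t) = some (b.get t)) ∧
      w (i + 1 + b.length) = none) : b ∈ R := by
  obtain ⟨f, hmono, hblk⟩ := hw hinf
  obtain ⟨i, hiN, hi0, hib, hie⟩ := hocc (f 0)
  obtain ⟨k, hk⟩ := hds_none_eq hmono hblk i hiN hi0
  obtain ⟨x, hxR, heq⟩ := (hblk k).2
  obtain ⟨hlen, hval⟩ := ofFn_map_some heq
  have hlt : f k < f (k + 1) := hmono (lt_add_one k)
  have h1 : i + 1 + b.length ≤ f (k + 1) := by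
    by_contra hcon
    push_neg at hcon
    have hge : i < f (k + 1) := by omega
    have ht : f (k + 1) - (i + 1) < b.length := by omega
    have := hib ⟨f (k + 1) - (i + 1), ht⟩
    rw [show i + 1 + (f (k + 1) - (i + 1)) = f (k + 1) from by omega] at this
    rw [(hblk (k + 1)).1] at this; cases this
  have h2 : f (k + 1) ≤ i + 1 + b.length := by
    by_contra hcon
    push_neg at hcon
    obtain ⟨a, ha⟩ := hds_some hblk k (i + 1 + b.length) (by omega) hcon
    rw [hie] at ha; cases ha
  have hfk1 : f (k + 1) = i + 1 + b.length := le_antisymm h2 h1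
  have hxb : x = b := by
    apply List.ext_getElem
    · omega
    · intro t ht1 ht2
      have hv := hval t (by omega)
      rw [show f k + 1 + t = i + 1 + t from by omega] at hv
      have hb := hib ⟨t, ht2⟩
      simp only [List.get_eq_getElem] at hb
      rw [hv] at hb
      exact Option.some_injective A hb
  rwa [hxb] at hxR

/-- If `w ∈ Bowtie R` has infinitely many `$`s and contains `x` (over `Σ`) at
unboundedly late positions, then some word of `R` has `x` as an infix. -/
lemma infix_mem (hw : w ∈ Bowtie R)
    (hinf : ∀ N, ∃ i, N ≤ i ∧ w i = none) (x : List A) (hx : 0 < x.length)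
    (hocc : ∀ N, ∃ i, N ≤ i ∧ ∀ t : Fin x.length, w (i + ↑t) = some (x.get t)) :
    ∃ u ∈ R, x <:+: u := by
  classical
  obtain ⟨f, hmono, hblk⟩ := hw hinf
  obtain ⟨i, hiN, hocc'⟩ := hocc (f 0 + 1)
  set P : ℕ → Prop := fun k => f k < i with hP
  have hP0 : P 0 := by omega
  set k := Nat.findGreatest P i with hk
  have hPk : P k := Nat.findGreatest_spec (Nat.zero_le i) hP0
  have hfk1 : i ≤ f (k + 1) := by
    by_cases hc : k + 1 ≤ i
    · have := Nat.findGreatest_is_greatest (lt_add_one k) hc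
      simp only [hP, not_lt] at this
      exact this
    · have h2 : k + 1 ≤ f (k + 1) := hmono.le_apply
      omega
  obtain ⟨xk, hxkR, heq⟩ := (hblk k).2
  obtain ⟨hlen, hval⟩ := ofFn_map_some heq
  have hend : i + x.length ≤ f (k + 1) := by
    by_contra hcon
    push_neg at hcon
    have ht : f (k + 1) - i < x.length := by omega
    have := hocc' ⟨f (k + 1) - i, ht⟩
    rw [show i + (f (k + 1) - i) = f (k + 1) from by omega] at this
    rw [(hblk (k + 1)).1] at this; cases this
  set a := i - (f k + 1) with ha
  have haL : a + x.length ≤ xk.length := by omega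
  -- elementwise : x[t] = xk[a+t]
  have helt : ∀ t (ht : t < x.length), x[t]'ht = xk[a + t]'(by omega) := by
    intro t ht
    have hv := hval (a + t) (by omega)
    rw [show f k + 1 + (a + t) = i + t from by omega] at hv
    have hb := hocc' ⟨t, ht⟩
    simp only [List.get_eq_getElem] at hb
    rw [hv] at hb
    exact (Option.some_injective A hb).symm
  refine ⟨xk, hxkR, ?_⟩
  have hxeq : x = (xk.drop a).take x.length := by
    apply List.ext_getElem
    · simp; omega
    · intro t ht1 ht2
      simp only [List.getElem_take, List.getElem_drop]
      exact helt t ht1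
  rw [hxeq]
  exact ((xk.drop a).take_prefix x.length).isInfix.trans (xk.drop_suffix a).isInfix

end Core

section Sound

variable {M : tNCW (Option A) Q} {R : Set (List A)}

lemma Ttr_sound (hL : M.Lang = Bowtie R) {p q : Q} {u : List A}
    (hp : p ∈ Gs M) (hrun : finRun (Ttr M) p u q) (hq : q ∈ Fs M) : u ∈ R := by
  obtain ⟨hre, q'', hpq'', hSPpq''⟩ := hp
  obtain ⟨p₂, hp₂, hSPp₂q⟩ := hq
  have hu : finRun (sdel M) p (u.map some) q := Ttr_run_safe hrun
  have hSPp₂q'' : SP M p₂ q'' :=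
    SP_trans hSPp₂q (SP_trans (Ttr_run_back hrun) hSPpq'')
  obtain ⟨y2, hy2⟩ := hSPp₂q''
  set z : List (Option A) := none :: (u.map some ++ none :: y2) with hzdef
  have hcyc : finRun (sdel M) q'' z q'' :=
    ⟨p, hpq'', finRun_append hu ⟨p₂, hp₂, hy2⟩⟩
  have hreq'' : Reach M q'' := by
    obtain ⟨y0, hy0⟩ := hSPpq''
    exact Reach_extend hre (finRun_mono (fun q b => sdel_sub q b) hy0)
  have hm : 0 < z.length := by simp [hzdef]
  obtain ⟨w, n, hwL, hper⟩ := cyc_lang hcyc hm hreq''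
  have hwB : w ∈ Bowtie R := by rw [← hL]; exact hwL
  set m := z.length with hmdef
  have hmu : u.length + 1 < m := by simp [hzdef, hmdef]
  have hz0 : z.get ⟨0, hm⟩ = none := rfl
  have hzt : ∀ t (ht : t < u.length), z.get ⟨t + 1, by omega⟩ = some (u.get ⟨t, ht⟩) := by
    intro t ht
    simp only [hzdef, List.get_eq_getElem, List.getElem_cons_succ]
    rw [List.getElem_append_left (by simpa using ht)]
    simp
  have hzl : z.get ⟨u.length + 1, by omega⟩ = none := by
    simp only [hzdef, List.get_eq_getElem, List.getElem_cons_succ]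
    rw [List.getElem_append_right (by simp)]
    simp
  have hNle : ∀ N : ℕ, N ≤ n + N * m := by
    intro N
    have : N ≤ N * m := Nat.le_mul_of_pos_right N hm
    omega
  have hinf : ∀ N, ∃ i, N ≤ i ∧ w i = none := by
    intro N
    refine ⟨n + N * m + 0, by have := hNle N; omega, ?_⟩
    have := hper N ⟨0, hm⟩
    exact this.trans hz0
  refine block_mem hwB hinf u ?_
  intro N
  refine ⟨n + N * m + 0, by have := hNle N; omega, ?_, ?_, ?_⟩
  · have := hper N ⟨0, hm⟩; exact this.trans hz0
  · intro t
    have h1 := hper N ⟨↑t + 1, by omega⟩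
    rw [hzt ↑t t.2] at h1
    rw [show n + N * m + 0 + 1 + ↑t = n + N * m + ↑(⟨↑t + 1, by omega⟩ : Fin m) from by
      simp; omega]
    rw [h1]
  · have h1 := hper N ⟨u.length + 1, by omega⟩
    rw [hzl] at h1
    rw [show n + N * m + 0 + 1 + u.length = n + N * m + ↑(⟨u.length + 1, by omega⟩ : Fin m) from by
      simp; omega]
    exact h1

end Sound

section Complete

variable {M : tNCW (Option A) Q} {R : Set (List A)}

lemma getElem_idx_congr {B : Type} {x : List B} {a b : ℕ} (h : a = b) (ha : a < x.length) :
    x[a]'ha = x[b]'(h ▸ ha) := by subst h; rfl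

lemma exists_freq_val [Fintype Q] (g : ℕ → Q) : ∃ p, ∀ N, ∃ k, N ≤ k ∧ g k = p := by
  by_contra hcon
  push_neg at hcon
  choose bnd hbnd using hcon
  set B := Finset.univ.sup bnd with hB
  exact hbnd (g B) B (Finset.le_sup (Finset.mem_univ _)) rfl

lemma finRun_of_fun {B : Type} {δ : Q → B → Set Q} (r : ℕ → Q) (l : List B) (j : ℕ)
    (h : ∀ t (ht : t < l.length), r (j + t + 1) ∈ δ (r (j + t)) (l[t]'ht)) :
    finRun δ (r j) l (r (j + l.length)) := by
  induction l generalizing j with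
  | nil => exact (show r j = r (j + 0) from by rw [Nat.add_zero])
  | cons b l ih =>
    refine ⟨r (j + 1), by exact h 0 (by simp), ?_⟩
    have := ih (j + 1) (fun t ht => by
      have h2 := h (t + 1) (by simpa using ht)
      rw [show j + (t + 1) = j + 1 + t from by omega] at h2
      simpa using h2)
    rw [show j + 1 + l.length = j + (b :: l).length from by simp; omega] at this
    exact this

lemma Ttr_complete [Fintype Q] (hL : M.Lang = Bowtie R) {u : List A} (hu : u ∈ R) :
    ∃ p q, p ∈ Gs M ∧ finRun (Ttr M) p u q ∧ q ∈ Fs M := by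
  classical
  set m := u.length with hmdef
  set w : ℕ → Option A :=
    fun i => if i % (m + 1) = 0 then none else u[(i % (m + 1)) - 1]? with hwdef
  have hw0 : ∀ j : ℕ, w (j * (m + 1)) = none := by
    intro j
    simp [hwdef, Nat.mul_mod_left]
  have hwlet : ∀ (j t : ℕ) (ht : t < m), w (j * (m + 1) + 1 + t) = some (u[t]'ht) := by
    intro j t ht
    have h1 : (j * (m + 1) + 1 + t) % (m + 1) = 1 + t := by
      rw [show j * (m + 1) + 1 + t = (1 + t) + j * (m + 1) from by ring,
        Nat.add_mul_mod_self_right, Nat.mod_eq_of_lt (by omega)]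
    simp only [hwdef, h1]
    rw [if_neg (by omega)]
    rw [show 1 + t - 1 = t from by omega]
    exact List.getElem?_eq_getElem ht
  -- the word ($u)^ω is in Bowtie R
  have hwB : w ∈ Bowtie R := by
    intro _
    refine ⟨fun k => k * (m + 1), ?_, ?_⟩
    · intro a b hab
      exact Nat.mul_lt_mul_of_lt_of_le hab (le_refl (m + 1)) (by omega)
    · intro k
      refine ⟨hw0 k, u, hu, ?_⟩
      have hlen : (k + 1) * (m + 1) - (k * (m + 1) + 1) = m := by
        have : (k + 1) * (m + 1) = k * (m + 1) + (m + 1) := by ring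
        omega
      apply List.ext_getElem
      · simp [hlen]; exact hmdef
      · intro t ht1 ht2
        have ht : t < m := by simpa [hlen] using ht1
        simp only [List.getElem_ofFn, List.getElem_map]
        rw [hwlet k t ht]
  have hwL : w ∈ M.Lang := by rw [hL]; exact hwB
  obtain ⟨q₀, hq₀, rf, hr0, hrt, hrs⟩ := hwL
  rw [eventually_atTop] at hrs
  obtain ⟨I, hI⟩ := hrs
  set pos : ℕ → ℕ := fun k => (I + k) * (m + 1) + 1 with hposdef
  have hposI : ∀ k, I ≤ pos k := by
    intro k
    have : I + k ≤ (I + k) * (m + 1) := Nat.le_mul_of_pos_right _ (Nat.succ_pos m)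
    simp only [hposdef]; omega
  have hposlet : ∀ k (t : ℕ) (ht : t < m), w (pos k + t) = some (u[t]'ht) := by
    intro k t ht
    exact hwlet (I + k) t ht
  have hposnone : ∀ k, w (pos k + m) = none := by
    intro k
    have : pos k + m = (I + k + 1) * (m + 1) := by simp only [hposdef]; ring
    rw [this]; exact hw0 _
  have hposnone' : ∀ k, w (pos k - 1) = none := by
    intro k
    have : pos k - 1 = (I + k) * (m + 1) := by simp only [hposdef]; omega
    rw [this]; exact hw0 _
  obtain ⟨p₁, hp₁⟩ := exists_freq_val (fun k => rf (pos k))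
  obtain ⟨k₀, -, hk₀⟩ := hp₁ 0
  obtain ⟨k₁, hk₁ge, hk₁⟩ := hp₁ (k₀ + m + 2)
  set i := pos k₀ with hidef
  have hgap : i + m + 2 ≤ pos k₁ := by
    have h1 : (I + k₀) + (m + 2) ≤ I + k₁ := by omega
    have h2 : ((I + k₀) + (m + 2)) * (m + 1) ≤ (I + k₁) * (m + 1) :=
      Nat.mul_le_mul_right _ h1
    have h3 : ((I + k₀) + (m + 2)) * (m + 1) = (I + k₀) * (m + 1) + (m + 2) * (m + 1) := by
      ring
    have h4 : m + 2 ≤ (m + 2) * (m + 1) := Nat.le_mul_of_pos_right _ (Nat.succ_pos m)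
    simp only [hidef, hposdef]
    omega
  -- safe-path between run positions
  have hSP : ∀ s t : ℕ, I ≤ s → s ≤ t → SP M (rf s) (rf t) := by
    intro s t hs hst
    have h := fun_toFinRun (δ := sdel M) rf w s (t - s)
      (fun i hi hi' => ⟨hrt i, hI i (by omega)⟩)
    rw [show s + (t - s) = t from by omega] at h
    exact ⟨_, h⟩
  have hIi : I ≤ i := hposI k₀
  -- the T-run on u from p₁
  have htrun : finRun (Ttr M) p₁ u (rf (i + m)) := by
    rw [← hk₀]
    have := finRun_of_fun (δ := Ttr M) rf u i (fun t ht => ?_)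
    · exact this
    · refine ⟨⟨?_, ?_⟩, ?_⟩
      · have h1 := hrt (i + t)
        rw [show i + t = pos k₀ + t from rfl, hposlet k₀ t ht] at h1
        exact h1
      · have h1 := hI (i + t) (by omega)
        rw [show i + t = pos k₀ + t from rfl, hposlet k₀ t ht] at h1
        exact h1
      · have ha : SP M (rf (i + t + 1)) p₁ := by
          have hx := hSP (i + t + 1) (pos k₁) (by omega) (by omega)
          rwa [hk₁] at hx
        have hb : SP M p₁ (rf (i + t)) := by
          have hx := hSP i (i + t) hIi (by omega)
          rwa [hk₀] at hx
        exact SP_trans ha hb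
  refine ⟨p₁, rf (i + m), ⟨?_, ?_⟩, htrun, ?_⟩
  · -- Reach p₁
    refine ⟨List.ofFn fun t : Fin i => w ↑t, ?_⟩
    rw [mem_extSet_iff]
    refine ⟨q₀, hq₀, ?_⟩
    have h := fun_toFinRun (δ := M.δ) rf w 0 i (fun j hj hj' => hrt j)
    simp only [Nat.zero_add] at h
    rw [hr0] at h
    rw [← hk₀]
    exact h
  · -- after-$ membership : q'' = rf (pos k₁ - 1)
    refine ⟨rf (pos k₁ - 1), ⟨?_, ?_⟩, ?_⟩
    · have h1 := hrt (pos k₁ - 1)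
      rw [hposnone' k₁, show pos k₁ - 1 + 1 = pos k₁ from by have := hposI k₁; simp only [hposdef]; omega] at h1
      rw [← hk₁]
      exact h1
    · have h1 := hI (pos k₁ - 1) (by have := hposI k₁; have := hgap; omega)
      rw [hposnone' k₁, show pos k₁ - 1 + 1 = pos k₁ from by simp only [hposdef]; omega] at h1
      rw [← hk₁]
      exact h1
    · have hx := hSP i (pos k₁ - 1) hIi (by omega)
      rwa [hk₀] at hx
  · -- rf (i + m) ∈ Fs
    refine ⟨rf (i + m + 1), ⟨?_, ?_⟩, ?_⟩
    · have h1 := hrt (i + m)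
      rw [hposnone k₀] at h1
      exact h1
    · have h1 := hI (i + m) (by omega)
      rw [hposnone k₀] at h1
      exact h1
    · have ha : SP M (rf (i + m + 1)) p₁ := by
        have hx := hSP (i + m + 1) (pos k₁) (by omega) (by omega)
        rwa [hk₁] at hx
      have hb : SP M p₁ (rf (i + m)) := by
        have hx := hSP i (i + m) hIi (by omega)
        rwa [hk₀] at hx
      exact SP_trans ha hb

end Complete

section Dead

variable {M : tNCW (Option A) Q} {R : Set (List A)}

lemma dead_state [Fintype Q] (hL : M.Lang = Bowtie R) {x : List A}
    (hx : BadInfix R x) (hxne : x ≠ []) :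
    ∃ d : Q, ∀ p ∈ Gs M, ¬ (SP M p d ∧ SP M d p) := by
  classical
  set L := x.length with hLdef
  have hL0 : 0 < L := by simpa [hLdef, List.length_pos_iff] using hxne
  set wx : ℕ → Option A := fun i => some (x[i % L]'(Nat.mod_lt _ hL0)) with hwxdef
  have hwxB : wx ∈ Bowtie R := by
    intro h
    exfalso
    obtain ⟨i, -, hi⟩ := h 0
    simp [hwxdef] at hi
  have hwxL : wx ∈ M.Lang := by rw [hL]; exact hwxB
  obtain ⟨q₀, hq₀, rf, hr0, hrt, hrs⟩ := hwxL
  rw [eventually_atTop] at hrs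
  obtain ⟨I, hI⟩ := hrs
  obtain ⟨d, hd⟩ := exists_freq_val (fun k => rf (I + k))
  refine ⟨d, fun p hpG hcon => ?_⟩
  obtain ⟨hSPpd, hSPdp⟩ := hcon
  obtain ⟨hre, q'', hpq'', hSPpq''⟩ := hpG
  have hSP : ∀ s t : ℕ, I ≤ s → s ≤ t → SP M (rf s) (rf t) := by
    intro s t hs hst
    have h := fun_toFinRun (δ := sdel M) rf wx s (t - s)
      (fun i hi hi' => ⟨hrt i, hI i (by omega)⟩)
    rw [show s + (t - s) = t from by omega] at h
    exact ⟨_, h⟩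
  obtain ⟨k₀, -, hk₀⟩ := hd 0
  obtain ⟨k₁, hk₁ge, hk₁⟩ := hd (k₀ + 2 * L + 1)
  set i := I + k₀ with hidef
  set j := I + k₁ with hjdef
  have hij : i + 2 * L + 1 ≤ j := by omega
  have hiI : I ≤ i := by omega
  -- aligned occurrence of x between i and j
  have hdm := Nat.div_add_mod i L
  have hmlt := Nat.mod_lt i hL0
  set c := i / L with hcdef
  have hc1 : (c + 1) * L = L * c + L := by ring
  have hA : i ≤ (c + 1) * L := by omega
  have hB : (c + 1) * L + L ≤ j := by omega
  have hxlet : ∀ t (ht : t < L), wx ((c + 1) * L + t) = some (x[t]'(hLdef ▸ ht)) := by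
    intro t ht
    simp only [hwxdef]
    congr 1
    refine getElem_idx_congr ?_ _
    rw [show (c + 1) * L + t = t + (c + 1) * L from by ring, Nat.add_mul_mod_self_right,
      Nat.mod_eq_of_lt ht]
  have hxrun : finRun (sdel M) (rf ((c + 1) * L)) (x.map some) (rf ((c + 1) * L + L)) := by
    have h := fun_toFinRun (δ := sdel M) rf wx ((c + 1) * L) L
      (fun i hi hi' => ⟨hrt i, hI i (by omega)⟩)
    have heq : (List.ofFn fun t : Fin L => wx ((c + 1) * L + ↑t)) = x.map some := by
      apply List.ext_getElem
      · simp [hLdef]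
      · intro t ht1 ht2
        have htL : t < L := by simpa using ht1
        simp only [List.getElem_ofFn, List.getElem_map]
        rw [hxlet t htL]
    rw [heq] at h
    exact h
  have hSPds₁ : SP M d (rf ((c + 1) * L)) := by
    have h := hSP i ((c + 1) * L) hiI hA
    rwa [hk₀] at h
  have hSPs₂d : SP M (rf ((c + 1) * L + L)) d := by
    have h := hSP ((c + 1) * L + L) j (by omega) (by omega)
    rwa [hk₁] at h
  obtain ⟨ya, hya⟩ := SP_trans hSPpd hSPds₁
  obtain ⟨yb, hyb⟩ := SP_trans hSPs₂d (SP_trans hSPdp hSPpq'')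
  set z : List (Option A) := none :: (ya ++ (x.map some ++ yb)) with hzdef
  have hcyc : finRun (sdel M) q'' z q'' :=
    ⟨p, hpq'', finRun_append hya (finRun_append hxrun hyb)⟩
  have hreq'' : Reach M q'' := by
    obtain ⟨y0, hy0⟩ := hSPpq''
    exact Reach_extend hre (finRun_mono (fun q b => sdel_sub q b) hy0)
  have hm : 0 < z.length := by simp [hzdef]
  obtain ⟨w, n, hwL, hper⟩ := cyc_lang hcyc hm hreq''
  have hwB : w ∈ Bowtie R := by rw [← hL]; exact hwL
  set m := z.length with hmdef
  have hmz : z.length = 1 + ya.length + x.length + yb.length := by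
    simp [hzdef]; omega
  have hz0 : z.get ⟨0, hm⟩ = none := rfl
  have hzx : ∀ t (ht : t < x.length),
      z.get ⟨ya.length + t + 1, by omega⟩ = some (x[t]'ht) := by
    intro t ht
    simp only [hzdef, List.get_eq_getElem, List.getElem_cons_succ]
    rw [List.getElem_append_right (by omega)]
    rw [List.getElem_append_left (by simp; omega)]
    simp only [List.getElem_map]
    congr 1
    exact getElem_idx_congr (by omega) _
  have hNle : ∀ N : ℕ, N ≤ n + N * m := by
    intro N
    have : N ≤ N * m := Nat.le_mul_of_pos_right N hm
    omega
  have hinf : ∀ N, ∃ i, N ≤ i ∧ w i = none := by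
    intro N
    refine ⟨n + N * m + 0, by have := hNle N; omega, ?_⟩
    have := hper N ⟨0, hm⟩
    exact this.trans hz0
  have hocc : ∀ N, ∃ i', N ≤ i' ∧ ∀ t : Fin x.length, w (i' + ↑t) = some (x.get t) := by
    intro N
    refine ⟨n + N * m + (ya.length + 1), by have := hNle N; omega, ?_⟩
    intro t
    have ht2 : (t : ℕ) < x.length := t.2
    have h1 := hper N ⟨ya.length + ↑t + 1, by omega⟩
    rw [hzx ↑t ht2] at h1
    rw [show n + N * m + (ya.length + 1) + ↑t = n + N * m + (ya.length + ↑t + 1) from by omega]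
    rw [h1]
    simp
  obtain ⟨u', hu'R, hinfix⟩ := infix_mem hwB hinf x hL0 hocc
  exact hx u' hinfix hu'R

end Dead

section Autom

variable {R : Set (List A)}

/-- The NFW with one extra state (a rejecting sink). -/
def N1 (M : tNCW (Option A) Q) : NFW A (Q ⊕ Unit) where
  init := (Sum.inl '' Gs M) ∪ {Sum.inr ()}
  δ := fun s a =>
    match s with
    | Sum.inl q => (Sum.inl '' Ttr M q a) ∪ {Sum.inr ()}
    | Sum.inr _ => {Sum.inr ()}
  F := Sum.inl '' Fs M
  init_nonempty := ⟨Sum.inr (), Or.inr rfl⟩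
  δ_nonempty := by
    intro s a
    cases s with
    | inl q => exact ⟨Sum.inr (), Or.inr rfl⟩
    | inr _ => exact ⟨Sum.inr (), rfl⟩

lemma N1_sink {M : tNCW (Option A) Q} {u : List A} {e : Q ⊕ Unit}
    (h : finRun (N1 M).δ (Sum.inr ()) u e) : e = Sum.inr () := by
  induction u with
  | nil => exact h.symm
  | cons b u ih =>
    obtain ⟨p', hp', h'⟩ := h
    cases hp'
    exact ih h'

lemma N1_toTtr {M : tNCW (Option A) Q} {u : List A} {p q : Q}
    (h : finRun (N1 M).δ (Sum.inl p) u (Sum.inl q)) : finRun (Ttr M) p u q := by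
  induction u generalizing p with
  | nil => exact Sum.inl.inj h
  | cons b u ih =>
    obtain ⟨p', hp', h'⟩ := h
    rcases hp' with ⟨p'', hp'', rfl⟩ | hp'
    · exact ⟨p'', hp'', ih h'⟩
    · cases hp'
      exact absurd (N1_sink h') (by simp)

lemma N1_ofTtr {M : tNCW (Option A) Q} {u : List A} {p q : Q}
    (h : finRun (Ttr M) p u q) : finRun (N1 M).δ (Sum.inl p) u (Sum.inl q) := by
  induction u generalizing p with
  | nil => exact congrArg Sum.inl h
  | cons b u ih =>
    obtain ⟨p', hp', h'⟩ := h
    exact ⟨Sum.inl p', Or.inl ⟨p', hp', rfl⟩, ih h'⟩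

lemma N1_lang [Fintype Q] {M : tNCW (Option A) Q} (hL : M.Lang = Bowtie R) :
    (N1 M).Lang = R := by
  ext u
  constructor
  · rintro ⟨s, hs, hsF⟩
    obtain ⟨qf, hqf, rfl⟩ := hsF
    obtain ⟨s₀, hs₀, hrun⟩ := mem_extSet_iff.mp hs
    rcases hs₀ with ⟨p, hpG, rfl⟩ | hs₀
    · exact Ttr_sound hL hpG (N1_toTtr hrun) hqf
    · cases hs₀
      exact absurd (N1_sink hrun) (by simp)
  · intro hu
    obtain ⟨p, q, hpG, hrun, hqF⟩ := Ttr_complete hL hu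
    exact ⟨Sum.inl q, mem_extSet_iff.mpr ⟨Sum.inl p, Or.inl ⟨p, hpG, rfl⟩, N1_ofTtr hrun⟩,
      ⟨q, hqF, rfl⟩⟩

/-- The NFW re-using a dead state `d` of `M` as the rejecting sink. -/
def N2 (M : tNCW (Option A) Q) (d : Q) [DecidableEq Q] : NFW A Q where
  init := Gs M ∪ {d}
  δ := fun q a => if q = d then {d} else (Ttr M q a ∪ {d})
  F := Fs M \ {d}
  init_nonempty := ⟨d, Or.inr rfl⟩
  δ_nonempty := by
    intro q a
    by_cases h : q = d
    · exact ⟨d, by simp [h]⟩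
    · exact ⟨d, by simp [h]⟩

variable [DecidableEq Q]

lemma N2_sink {M : tNCW (Option A) Q} {d : Q} {u : List A} {e : Q}
    (h : finRun (N2 M d).δ d u e) : e = d := by
  induction u with
  | nil => exact h.symm
  | cons b u ih =>
    obtain ⟨p', hp', h'⟩ := h
    simp only [N2, if_pos rfl, Set.mem_singleton_iff] at hp'
    subst hp'
    exact ih h'

lemma N2_toTtr {M : tNCW (Option A) Q} {d : Q} {u : List A} {p q : Q}
    (h : finRun (N2 M d).δ p u q) (hp : p ≠ d) (hq : q ≠ d) : finRun (Ttr M) p u q := by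
  induction u generalizing p with
  | nil => exact h
  | cons b u ih =>
    obtain ⟨p', hp', h'⟩ := h
    simp only [N2, if_neg hp] at hp'
    by_cases hp'd : p' = d
    · subst hp'd
      exact absurd (N2_sink h') hq
    · rcases hp' with hp' | hp'
      · exact ⟨p', hp', ih h' hp'd⟩
      · exact absurd hp' hp'd

lemma N2_ofTtr {M : tNCW (Option A) Q} {d : Q}
    (hd : ∀ p ∈ Gs M, ¬ (SP M p d ∧ SP M d p)) {p₀ : Q} (hp₀ : p₀ ∈ Gs M) :
    ∀ (u : List A) (p q : Q), SP M p₀ p → SP M p p₀ → finRun (Ttr M) p u q →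
      finRun (N2 M d).δ p u q := by
  intro u
  induction u with
  | nil => intro p q _ _ h; exact h
  | cons b u ih =>
    intro p q hsp1 hsp2 h
    obtain ⟨p', hp', h'⟩ := h
    have hpd : p ≠ d := by
      rintro rfl
      exact hd p₀ hp₀ ⟨hsp1, hsp2⟩
    refine ⟨p', ?_, ?_⟩
    · simp only [N2, if_neg hpd]
      exact Or.inl hp'
    · exact ih p' q (SP_trans hsp1 (SP_step hp'.1)) (SP_trans hp'.2 hsp2) h'

lemma N2_lang [Fintype Q] {M : tNCW (Option A) Q} {d : Q}
    (hL : M.Lang = Bowtie R) (hd : ∀ p ∈ Gs M, ¬ (SP M p d ∧ SP M d p)) :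
    (N2 M d).Lang = R := by
  ext u
  constructor
  · rintro ⟨s, hs, hsF, hsd⟩
    obtain ⟨s₀, hs₀, hrun⟩ := mem_extSet_iff.mp hs
    have hsd' : s ≠ d := hsd
    rcases hs₀ with hs₀ | hs₀
    · have hs₀d : s₀ ≠ d := by
        rintro rfl
        exact hd s₀ hs₀ ⟨SP_refl _, SP_refl _⟩
      exact Ttr_sound hL hs₀ (N2_toTtr hrun hs₀d hsd') hsF
    · cases hs₀
      exact absurd (N2_sink hrun) hsd'
  · intro hu
    obtain ⟨p, q, hpG, hrun, hqF⟩ := Ttr_complete hL hu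
    have hqd : q ≠ d := by
      rintro rfl
      exact hd p hpG ⟨⟨_, Ttr_run_safe hrun⟩, Ttr_run_back hrun⟩
    exact ⟨q, mem_extSet_iff.mpr ⟨p, Or.inl hpG,
      N2_ofTtr hd hpG u p q (SP_refl _) (SP_refl _) hrun⟩, hqF, hqd⟩

end Autom

/-- From any tNCW for `⋈_$(R)` one can obtain an NFW for `R` with at most one
extra state; if `R` has a bad infix, with no extra state at all. -/
theorem tncw_to_nfw [Fintype Q] (R : Set (List A)) (M : tNCW (Option A) Q)
    (hL : M.Lang = Bowtie R) :
    (∃ (Q' : Type) (_ : Fintype Q') (N : NFW A Q'),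
        N.Lang = R ∧ Fintype.card Q' ≤ Fintype.card Q + 1) ∧
    ((∃ x, BadInfix R x) →
      ∃ (Q' : Type) (_ : Fintype Q') (N : NFW A Q'),
        N.Lang = R ∧ Fintype.card Q' ≤ Fintype.card Q) := by
  classical
  constructor
  · exact ⟨Q ⊕ Unit, inferInstance, N1 M, N1_lang hL, by simp⟩
  · rintro ⟨x, hx⟩
    by_cases hxe : x = []
    · obtain ⟨q0, hq0⟩ := M.init_nonempty
      have hR : R = ∅ := by
        ext u
        simp only [Set.mem_empty_iff_false, iff_false]
        intro hu
        exact hx u (by rw [hxe]; exact List.nil_infix) hu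
      refine ⟨Q, inferInstance, ⟨Set.univ, fun _ _ => Set.univ, ∅, ⟨q0, trivial⟩,
        fun _ _ => ⟨q0, trivial⟩⟩, ?_, le_refl _⟩
      rw [hR]
      ext u
      simp [NFW.Lang]
    · obtain ⟨d, hd⟩ := dead_state hL hx hxe
      exact ⟨Q, inferInstance, N2 M d, N2_lang hL hd, le_refl _⟩
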